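/- Let P be a class of finite groups (a property of finite groups invariant under group isomorphism) that is closed under taking subgroups, quotient groups, and finite direct products, and which is extension-closed: whenever N is a normal subgroup of a finite group G such that both N and G/N satisfy P, then G satisfies P. If P holds for some group with more than one element, then every finite group L satisfying P embeds (via an injective group homomorphism) into a finite group G satisfying P that is generated by at most 2 elements. -/

import Mathlib

open SemidirectProduct Multiplicative
open scoped commutatorElement

namespace NNEmbed

variable (Q : Type) [Group Q] (m : ℕ)

/-- The shift automorphism of the direct power `ZMod m → Q`. -/
def shiftEquiv (s : ZMod m) : (ZMod m → Q) ≃* (ZMod m → Q) where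
  toFun x := fun c => x (c + s)
  invFun x := fun c => x (c - s)
  left_inv x := funext fun c => by simp
  right_inv x := funext fun c => by simp
  map_mul' x y := rfl

/-- The shift action of `Multiplicative (ZMod m)` on `ZMod m → Q`. -/
def shiftHom : Multiplicative (ZMod m) →* MulAut (ZMod m → Q) where
  toFun s := shiftEquiv Q m s.toAdd
  map_one' := by
    ext x c
    show x (c + 0) = x c
    rw [add_zero]
  map_mul' s₁ s₂ := by
    ext x c
    show x (c + (s₁.toAdd + s₂.toAdd)) = x (c + s₁.toAdd + s₂.toAdd)
    rw [add_assoc]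

/-- The wreath product `Q ≀ (ZMod m)`. -/
abbrev Wreath := (ZMod m → Q) ⋊[shiftHom Q m] Multiplicative (ZMod m)

instance semidirectFinite {N G : Type*} [Group N] [Group G] [Finite N] [Finite G]
    {φ : G →* MulAut N} : Finite (N ⋊[φ] G) := by
  apply Finite.of_injective (fun w : N ⋊[φ] G => (w.left, w.right))
  intro a b h
  rw [Prod.ext_iff] at h
  cases a; cases b
  simp_all

/-- Transport along an equality of moduli. -/
def zmodMulCongr {m n : ℕ} (h : m = n) :
    Multiplicative (ZMod m) ≃* Multiplicative (ZMod n) := h ▸ MulEquiv.refl _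

lemma conj_inl (d : ZMod m) (x : ZMod m → Q) :
    (inr (ofAdd d) : Wreath Q m) * inl x * inr (ofAdd d)⁻¹ = inl (fun c => x (c + d)) := by
  rw [← SemidirectProduct.inl_aut]
  rfl

lemma tau_pow (k : ℕ) :
    (inr (ofAdd (1 : ZMod m)) : Wreath Q m) ^ k = inr (ofAdd ((k : ZMod m))) := by
  rw [← map_pow]
  congr 1
  rw [← ofAdd_nsmul]
  congr 1
  rw [nsmul_eq_mul, mul_one]

lemma comm_inl_inr (x : ZMod m → Q) (d : ZMod m) :
    ⁅(inl x : Wreath Q m), (inr (ofAdd d) : Wreath Q m)⁆ = inl (fun c => x c * (x (c + d))⁻¹) := by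
  rw [commutatorElement_def]
  have h1 : (inl x : Wreath Q m)⁻¹ = inl x⁻¹ := (map_inv inl x).symm
  have h2 : (inr (ofAdd d) : Wreath Q m)⁻¹ = inr (ofAdd d)⁻¹ := (map_inv inr (ofAdd d)).symm
  rw [h1, h2, show (inl x : Wreath Q m) * inr (ofAdd d) * inl x⁻¹ * inr (ofAdd d)⁻¹
      = inl x * (inr (ofAdd d) * inl x⁻¹ * inr (ofAdd d)⁻¹) from by group,
    conj_inl, ← map_mul]
  rfl

lemma comm_inl_inl (x y : ZMod m → Q) :
    ⁅(inl x : Wreath Q m), (inl y : Wreath Q m)⁆ = inl (fun c => ⁅x c, y c⁆) := by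
  rw [← map_commutatorElement]
  rfl

lemma pow_congr_mod {G : Type*} [Group G] (x : G) {e : ℕ} (he : x ^ e = 1) {a b : ℕ}
    (h : a ≡ b [MOD e]) : x ^ a = x ^ b :=
  pow_eq_pow_iff_modEq.2 (h.of_dvd (orderOf_dvd_of_pow_eq_one he))

lemma comm_u_t {L : Type} [Group L] (e : ℕ) [NeZero e] (g : L) (hg : g ^ e = 1) :
    ⁅(inl (fun c : ZMod e => g ^ c.val) : Wreath L e), (inr (ofAdd 1) : Wreath L e)⁆ =
      inl (fun _ => g⁻¹) := by
  rw [comm_inl_inr]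
  congr 1
  funext c
  have key : g ^ ((c + 1 : ZMod e).val) = g ^ (c.val + 1) := by
    apply pow_congr_mod g hg
    have hv : (c + 1 : ZMod e).val = (c.val + (1 : ZMod e).val) % e := ZMod.val_add _ _
    calc (c + 1 : ZMod e).val = (c.val + (1 : ZMod e).val) % e := hv
      _ ≡ c.val + (1 : ZMod e).val [MOD e] := Nat.mod_modEq _ e
      _ ≡ c.val + 1 [MOD e] := by
          apply Nat.ModEq.add_left
          rw [← Nat.cast_one, ZMod.val_natCast]
          exact Nat.mod_modEq 1 e
  rw [key]
  group


section PClosure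

variable (P : ∀ (G : Type) [Group G] [Finite G], Prop)

/-- Isomorphism between any two subsingleton groups. -/
def trivMulEquiv {A B : Type*} [Group A] [Group B] [Subsingleton A] [Subsingleton B] :
    A ≃* B where
  toFun _ := 1
  invFun _ := 1
  left_inv _ := Subsingleton.elim _ _
  right_inv _ := Subsingleton.elim _ _
  map_mul' _ _ := (mul_one 1).symm

/-- `Q × (Fin k → Q) ≃* (Fin (k+1) → Q)`. -/
def finConsMulEquiv (Q : Type*) [Group Q] (k : ℕ) : (Q × (Fin k → Q)) ≃* (Fin (k + 1) → Q) where
  toFun p := Fin.cons p.1 p.2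
  invFun f := (f 0, fun i => f i.succ)
  left_inv p := by simp
  right_inv f := by
    funext i
    cases i using Fin.cases <;> simp
  map_mul' p q := by
    funext i
    cases i using Fin.cases <;> simp

variable
  (hiso : ∀ (G : Type) [Group G] [Finite G] (H : Type) [Group H] [Finite H],
      (G ≃* H) → P G → P H)
  (hsub : ∀ (G : Type) [Group G] [Finite G], P G → ∀ H : Subgroup G, P H)
  (hquot : ∀ (G : Type) [Group G] [Finite G], P G →
      ∀ (N : Subgroup G) (_ : N.Normal), P (G ⧸ N))
  (hprod : ∀ (G : Type) [Group G] [Finite G] (H : Type) [Group H] [Finite H],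
      P G → P H → P (G × H))
  (hext : ∀ (G : Type) [Group G] [Finite G] (N : Subgroup G) (_ : N.Normal),
      P N → P (G ⧸ N) → P G)

include hiso

theorem P_subsingleton (hpunit : P PUnit) (G : Type) [Group G] [Finite G]
    (hG : Subsingleton G) : P G :=
  hiso _ _ trivMulEquiv hpunit

include hprod in
theorem P_pi (hpunit : P PUnit) (Q : Type) [Group Q] [Finite Q] (hQ : P Q)
    (I : Type) [Finite I] : P (I → Q) := by
  have key : ∀ (k : ℕ) (J : Type) [Finite J], ∀ (_ : J ≃ Fin k), P (J → Q) := by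
    intro k
    induction k with
    | zero =>
      intro J _ eJ
      haveI : IsEmpty J := Function.isEmpty eJ.toFun
      exact P_subsingleton P hiso hpunit _ inferInstance
    | succ k ih =>
      intro J _ eJ
      have h1 : P (Fin k → Q) := ih (Fin k) (Equiv.refl _)
      have h2 : P (Q × (Fin k → Q)) := hprod _ _ hQ h1
      have h3 : P (Fin (k + 1) → Q) := hiso _ _ (finConsMulEquiv Q k) h2
      exact hiso _ _ (MulEquiv.arrowCongr eJ.symm (MulEquiv.refl Q)) h3
  exact key (Nat.card I) I (Finite.equivFin I)

include hext hquot in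
theorem P_semidirect (Nt : Type) [Group Nt] [Finite Nt] (Ht : Type) [Group Ht] [Finite Ht]
    (φ : Ht →* MulAut Nt) (hN : P Nt) (hH : P Ht) : P (Nt ⋊[φ] Ht) := by
  have hker : P ↥(MonoidHom.ker (SemidirectProduct.rightHom : Nt ⋊[φ] Ht →* Ht)) := by
    have h1 : P ↥((SemidirectProduct.inl : Nt →* Nt ⋊[φ] Ht).range) :=
      hiso _ _ (MonoidHom.ofInjective SemidirectProduct.inl_injective) hN
    exact hiso _ _ (MulEquiv.subgroupCongr SemidirectProduct.range_inl_eq_ker_rightHom) h1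
  have hq : P ((Nt ⋊[φ] Ht) ⧸ MonoidHom.ker (SemidirectProduct.rightHom :
      Nt ⋊[φ] Ht →* Ht)) := by
    refine hiso _ _ ?_ hH
    exact (QuotientGroup.quotientKerEquivOfSurjective _
      SemidirectProduct.rightHom_surjective).symm
  exact hext _ _ (MonoidHom.normal_ker _) hker hq

include hsub in
theorem P_zmod_orderOf (G : Type) [Group G] [Finite G] (x : G) (hG : P G)
    (e : ℕ) [NeZero e] (he : orderOf x = e) : P (Multiplicative (ZMod e)) := by
  haveI : IsCyclic ↥(Subgroup.zpowers x) := by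
    constructor
    refine ⟨⟨x, Subgroup.mem_zpowers x⟩, ?_⟩
    rintro ⟨y, k, rfl⟩
    exact ⟨k, Subtype.ext (by simp)⟩
  haveI : NeZero (Nat.card ↥(Subgroup.zpowers x)) := ⟨Nat.card_pos.ne'⟩
  have h1 : P ↥(Subgroup.zpowers x) := hsub G hG _
  have hc : Nat.card ↥(Subgroup.zpowers x) = e := by rw [Nat.card_zpowers x, he]
  have hkiso : Multiplicative (ZMod (Nat.card ↥(Subgroup.zpowers x))) ≃* ↥(Subgroup.zpowers x) :=
    zmodCyclicMulEquiv (by infer_instance)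
  exact hiso _ _ (hkiso.symm.trans (zmodMulCongr hc)) h1

include hext hquot in
theorem P_zmod_mul (a b : ℕ) (ha : 0 < a) (hb : 0 < b)
    (hPa : ∀ [NeZero a], P (Multiplicative (ZMod a)))
    (hPb : ∀ [NeZero b], P (Multiplicative (ZMod b))) :
    ∀ [NeZero (a * b)], P (Multiplicative (ZMod (a * b))) := by
  haveI : NeZero a := ⟨ha.ne'⟩
  haveI : NeZero b := ⟨hb.ne'⟩
  haveI : NeZero (a * b) := ⟨(Nat.mul_pos ha hb).ne'⟩
  intro _
  set A := Multiplicative (ZMod (a * b)) with hA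
  let f : A →* Multiplicative (ZMod a) :=
    AddMonoidHom.toMultiplicative (ZMod.castHom (dvd_mul_right a b) (ZMod a)).toAddMonoidHom
  have hfsurj : Function.Surjective f := by
    intro y
    refine ⟨Multiplicative.ofAdd ((y.toAdd.val : ℕ) : ZMod (a * b)), ?_⟩
    show Multiplicative.ofAdd ((ZMod.castHom (dvd_mul_right a b) (ZMod a))
      ((y.toAdd.val : ℕ) : ZMod (a * b))) = y
    rw [map_natCast, ZMod.natCast_zmod_val]
    rfl
  have hqiso : A ⧸ MonoidHom.ker f ≃* Multiplicative (ZMod a) :=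
    QuotientGroup.quotientKerEquivOfSurjective f hfsurj
  have hcardA : Nat.card A = a * b := Nat.card_zmod (a * b)
  have hcardQ : Nat.card (A ⧸ MonoidHom.ker f) = a := by
    rw [Nat.card_congr hqiso.toEquiv]
    exact Nat.card_zmod a
  have hcard : Nat.card ↥(MonoidHom.ker f) = b := by
    have h1 : Nat.card A = Nat.card (A ⧸ MonoidHom.ker f) * Nat.card ↥(MonoidHom.ker f) :=
      Subgroup.card_eq_card_quotient_mul_card_subgroup _
    rw [hcardA, hcardQ] at h1
    exact (Nat.eq_of_mul_eq_mul_left ha h1.symm)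
  haveI : IsCyclic ↥(MonoidHom.ker f) := Subgroup.isCyclic _
  have hkiso : Multiplicative (ZMod (Nat.card ↥(MonoidHom.ker f))) ≃* ↥(MonoidHom.ker f) :=
    zmodCyclicMulEquiv (by infer_instance)
  have hker : P ↥(MonoidHom.ker f) :=
    hiso _ _ ((zmodMulCongr hcard.symm).trans hkiso) hPb
  exact hext A (MonoidHom.ker f) (MonoidHom.normal_ker f) hker (hiso _ _ hqiso.symm hPa)

include hext hquot in
theorem P_zmod_pow (d : ℕ) (hd : 0 < d) (hpunit : P PUnit)
    (hPd : ∀ [NeZero d], P (Multiplicative (ZMod d))) (s : ℕ) :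
    ∀ [NeZero (d ^ s)], P (Multiplicative (ZMod (d ^ s))) := by
  induction s with
  | zero =>
    intro _
    exact P_subsingleton P hiso hpunit _ (by rw [pow_zero]; infer_instance)
  | succ s ih =>
    rw [pow_succ]
    exact P_zmod_mul P hiso hquot hext (d ^ s) d (Nat.pow_pos (n := s) hd) hd ih hPd

end PClosure

section Main

variable (L : Type) [Group L] (e : ℕ) [NeZero e]

/-- The cocycle function `c ↦ g ^ c.val`. -/
def uFun (g : L) : ZMod e → L := fun c => g ^ c.val

/-- The distinguished shift generator of the inner wreath product. -/
def tB : Wreath L e := SemidirectProduct.inr (ofAdd 1)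

/-- The constant-function (diagonal) homomorphism. -/
def constHom : L →* (ZMod e → L) where
  toFun g := fun _ => g
  map_one' := rfl
  map_mul' _ _ := rfl

/-- The diagonal embedding of `L` into the inner wreath product. -/
def DeltaHom : L →* Wreath L e := SemidirectProduct.inl.comp (constHom L e)

lemma DeltaHom_inj : Function.Injective (DeltaHom L e) := fun g h hgh => by
  have h1 := SemidirectProduct.inl_injective hgh
  exact congrFun h1 0

lemma comm_t_u (hge : ∀ g : L, g ^ e = 1) (g : L) :
    ⁅tB L e, (inl (uFun L e g) : Wreath L e)⁆ = DeltaHom L e g := by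
  have h : ⁅(inl (uFun L e g) : Wreath L e), tB L e⁆ = inl (fun _ => g⁻¹) :=
    comm_u_t e g (hge g)
  calc ⁅tB L e, (inl (uFun L e g) : Wreath L e)⁆
      = ⁅(inl (uFun L e g) : Wreath L e), tB L e⁆⁻¹ := (commutatorElement_inv _ _).symm
    _ = (inl (fun _ => g⁻¹) : Wreath L e)⁻¹ := by rw [h]
    _ = DeltaHom L e g := by
        rw [← map_inv]
        show (inl ((fun _ : ZMod e => g⁻¹)⁻¹) : Wreath L e) = _
        have : ((fun _ : ZMod e => g⁻¹)⁻¹) = fun _ : ZMod e => g := funext fun _ => inv_inv g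
        rw [this]
        rfl

variable (n N : ℕ) [NeZero N]

/-- Positions of the letters: `0, 1, …, n-1` and `2n+1`. -/
def posn : Fin (n + 1) → ℕ := fun i => if (i : ℕ) < n then (i : ℕ) else 2 * n + 1

/-- Positions viewed in `ZMod N`. -/
def posz : Fin (n + 1) → ZMod N := fun i => ((posn n i : ℕ) : ZMod N)

/-- The letters placed at those positions: the `uFun`s of the enumerated elements, and `tB`. -/
def valF (enum : Fin n ≃ L) : Fin (n + 1) → Wreath L e := fun i =>
  if h : (i : ℕ) < n then inl (uFun L e (enum ⟨i, h⟩)) else tB L e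

/-- The second generator of the two-generated subgroup, as a function. -/
noncomputable def betaF (enum : Fin n ≃ L) : ZMod N → Wreath L e := fun c =>
  if h : ∃ i, c = posz n N i then valF L e n enum h.choose else 1

variable (hN : 4 * n + 4 ≤ N)

lemma posn_le (i : Fin (n + 1)) : posn n i ≤ 2 * n + 1 := by
  have hi := i.isLt
  unfold posn
  split <;> omega

include hN in
lemma posn_lt (i : Fin (n + 1)) : posn n i < N := lt_of_le_of_lt (posn_le n i) (by omega)

include hN in
lemma posz_val (i : Fin (n + 1)) : (posz n N i).val = posn n i :=
  ZMod.val_natCast_of_lt (posn_lt n N hN i)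

include hN in
lemma posz_inj : Function.Injective (posz n N) := by
  intro i j hij
  have h1 : posn n i = posn n j := by
    rw [← posz_val n N hN i, ← posz_val n N hN j, hij]
  have hi := i.isLt
  have hj := j.isLt
  unfold posn at h1
  apply Fin.ext
  split_ifs at h1 <;> omega

lemma posn_last : posn n (Fin.last n) = 2 * n + 1 := by
  unfold posn
  rw [if_neg]
  simp

lemma posn_castSucc (i : Fin n) : posn n i.castSucc = (i : ℕ) := by
  unfold posn
  rw [if_pos]
  · simp
  · simpa using i.isLt

include hN in
lemma sidon (a b : Fin (n + 1)) (i : Fin n)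
    (hab : posz n N a + posz n N i.castSucc = posz n N (Fin.last n) + posz n N b) :
    a = Fin.last n ∧ b = i.castSucc := by
  have h2 : ((posn n a + posn n i.castSucc : ℕ) : ZMod N)
      = ((posn n (Fin.last n) + posn n b : ℕ) : ZMod N) := by
    push_cast
    exact hab
  have h3 := congrArg ZMod.val h2
  rw [ZMod.val_natCast_of_lt (by have := posn_le n a; have := posn_le n i.castSucc; omega),
    ZMod.val_natCast_of_lt (by have := posn_le n (Fin.last n); have := posn_le n b; omega)]
    at h3
  rw [posn_last, posn_castSucc] at h3
  have hil := i.isLt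
  have ha : a = Fin.last n := by
    by_contra hne
    have hv : (a : ℕ) < n := Fin.val_lt_last hne
    have hpa : posn n a = (a : ℕ) := by unfold posn; rw [if_pos hv]
    have hpb := posn_le n b
    omega
  refine ⟨ha, ?_⟩
  rw [ha, posn_last] at h3
  have hb : posn n b = (i : ℕ) := by omega
  have hbv : (b : ℕ) = (i : ℕ) := by
    unfold posn at hb
    split_ifs at hb <;> omega
  apply Fin.ext
  simpa using hbv

include hN in
lemma beta_eval (enum : Fin n ≃ L) (j : Fin (n + 1)) :
    betaF L e n N enum (posz n N j) = valF L e n enum j := by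
  unfold betaF
  have hex : ∃ i, posz n N j = posz n N i := ⟨j, rfl⟩
  rw [dif_pos hex]
  have h2 : hex.choose = j := (posz_inj n N hN hex.choose_spec).symm
  rw [h2]

lemma beta_ne (enum : Fin n ≃ L) (c : ZMod N) (hc : ∀ j, c ≠ posz n N j) :
    betaF L e n N enum c = 1 := by
  unfold betaF
  rw [dif_neg]
  rintro ⟨j, hj⟩
  exact hc j hj

lemma valF_castSucc (enum : Fin n ≃ L) (i : Fin n) :
    valF L e n enum i.castSucc = inl (uFun L e (enum i)) := by
  unfold valF
  rw [dif_pos (by simpa using i.isLt)]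
  congr

lemma valF_last (enum : Fin n ≃ L) : valF L e n enum (Fin.last n) = tB L e := by
  unfold valF
  rw [dif_neg]
  simp

include hN in
lemma key_comm (hge : ∀ g : L, g ^ e = 1) (enum : Fin n ≃ L) (i : Fin n) :
    (fun c => ⁅betaF L e n N enum (c + (posz n N (Fin.last n) - posz n N i.castSucc)),
        betaF L e n N enum c⁆)
      = Pi.mulSingle (posz n N i.castSucc) (DeltaHom L e (enum i)) := by
  funext c
  by_cases hc : c = posz n N i.castSucc
  · subst hc
    have h1 : posz n N i.castSucc + (posz n N (Fin.last n) - posz n N i.castSucc)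
        = posz n N (Fin.last n) := by ring
    rw [h1, beta_eval L e n N hN enum, beta_eval L e n N hN enum, valF_last, valF_castSucc,
      comm_t_u L e hge]
    rw [Pi.mulSingle_eq_same]
  · rw [Pi.mulSingle_eq_of_ne (M := fun _ => Wreath L e) hc]
    by_cases hcb : ∃ b, c = posz n N b
    · obtain ⟨b, rfl⟩ := hcb
      by_cases hca : ∃ a, posz n N b + (posz n N (Fin.last n) - posz n N i.castSucc)
          = posz n N a
      · obtain ⟨a, ha⟩ := hca
        exfalso
        have h2 : posz n N a + posz n N i.castSucc
            = posz n N (Fin.last n) + posz n N b := by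
          rw [← ha]; ring
        obtain ⟨-, hb2⟩ := sidon n N hN a b i h2
        exact hc (by rw [hb2])
      · push_neg at hca
        rw [beta_ne L e n N enum _ hca, commutatorElement_one_left]
    · push_neg at hcb
      rw [beta_ne L e n N enum _ hcb, commutatorElement_one_right]

end Main

end NNEmbed
open NNEmbed SemidirectProduct Multiplicative in
/-- Every member of a non-trivial extension-closed pseudovariety of finite groups embeds
into a 2-generated member of the pseudovariety (Neumann–Neumann embedding). -/
theorem embeds_into_two_generated_member
    (P : ∀ (G : Type) [Group G] [Finite G], Prop)
    (hiso : ∀ (G : Type) [Group G] [Finite G] (H : Type) [Group H] [Finite H],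
      (G ≃* H) → P G → P H)
    (hsub : ∀ (G : Type) [Group G] [Finite G], P G → ∀ H : Subgroup G, P H)
    (hquot : ∀ (G : Type) [Group G] [Finite G], P G →
      ∀ (N : Subgroup G) (_ : N.Normal), P (G ⧸ N))
    (hprod : ∀ (G : Type) [Group G] [Finite G] (H : Type) [Group H] [Finite H],
      P G → P H → P (G × H))
    (hext : ∀ (G : Type) [Group G] [Finite G] (N : Subgroup G) (_ : N.Normal),
      P N → P (G ⧸ N) → P G)
    (hnontriv : ∃ (G : Type) (_ : Group G) (_ : Finite G), P G ∧ Nontrivial G)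
    (L : Type) [Group L] [Finite L] (hL : P L) :
    ∃ (G : Type) (_ : Group G) (_ : Finite G),
      P G ∧ (∃ x y : G, Subgroup.closure {x, y} = ⊤) ∧
        ∃ f : L →* G, Function.Injective f := by
  classical
  obtain ⟨G₀, _, _, hG₀, hG₀nt⟩ := hnontriv
  obtain ⟨x₀, hx₀⟩ := exists_ne (1 : G₀)
  have hpunit : P PUnit := hiso _ _ NNEmbed.trivMulEquiv (hsub L hL ⊥)
  set n := Nat.card L with hn
  set e := orderOf (id : L → L) with he
  have hepos : 0 < e := orderOf_pos _
  haveI : NeZero e := ⟨hepos.ne'⟩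
  have hge : ∀ g : L, g ^ e = 1 := by
    intro g
    have h := congrFun (pow_orderOf_eq_one (id : L → L)) g
    simpa using h
  set d := orderOf x₀ with hd
  have hdpos : 0 < d := orderOf_pos x₀
  have hd1 : 1 < d := by
    have : d ≠ 1 := fun h1 => hx₀ (orderOf_eq_one_iff.mp h1)
    omega
  haveI : NeZero d := ⟨hdpos.ne'⟩
  set N := d ^ (4 * n + 4) with hNdef
  haveI : NeZero N := ⟨(pow_pos hdpos _).ne'⟩
  have hNge : 4 * n + 4 ≤ N := le_of_lt (Nat.lt_pow_self hd1)
  have hPN : P (Multiplicative (ZMod N)) :=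
    P_zmod_pow P hiso hquot hext d hdpos hpunit
      (by intro _; exact P_zmod_orderOf P hiso hsub G₀ x₀ hG₀ d hd.symm) (4 * n + 4)
  have hPLL : P (L → L) := P_pi P hiso hprod hpunit L hL L
  have hPCe : P (Multiplicative (ZMod e)) :=
    P_zmod_orderOf P hiso hsub (L → L) id hPLL e he.symm
  have hPB : P (Wreath L e) :=
    P_semidirect P hiso hquot hext _ _ _
      (P_pi P hiso hprod hpunit L hL (ZMod e)) hPCe
  have hPW : P (Wreath (Wreath L e) N) :=
    P_semidirect P hiso hquot hext _ _ _
      (P_pi P hiso hprod hpunit _ hPB (ZMod N)) hPN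
  -- the two-generated subgroup
  let enum : Fin n ≃ L := (Finite.equivFin L).symm
  let W := Wreath (Wreath L e) N
  let τ : W := inr (ofAdd (1 : ZMod N))
  let βw : W := inl (betaF L e n N enum)
  let H : Subgroup W := Subgroup.closure {τ, βw}
  have hτH : τ ∈ H := Subgroup.subset_closure (Set.mem_insert _ _)
  have hβH : βw ∈ H := Subgroup.subset_closure (Set.mem_insert_of_mem _ rfl)
  have hinrH : ∀ dz : ZMod N, (inr (ofAdd dz) : W) ∈ H := by
    intro dz
    have h := tau_pow (Wreath L e) N dz.val
    rw [ZMod.natCast_zmod_val] at h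
    rw [← h]
    exact Subgroup.pow_mem H hτH _
  have hconjH : ∀ (w : W), w ∈ H → ∀ dz : ZMod N,
      inr (ofAdd dz) * w * inr (ofAdd dz)⁻¹ ∈ H := by
    intro w hw dz
    have h1 := hinrH dz
    have h2 : (inr (ofAdd dz)⁻¹ : W) ∈ H := by
      rw [map_inv]
      exact Subgroup.inv_mem _ h1
    exact Subgroup.mul_mem _ (Subgroup.mul_mem _ h1 hw) h2
  have hshiftH : ∀ (x : ZMod N → Wreath L e), (inl x : W) ∈ H →
      ∀ dz : ZMod N, (inl (fun c => x (c + dz)) : W) ∈ H := by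
    intro x hx dz
    rw [← conj_inl]
    exact hconjH _ hx dz
  have hcommH : ∀ w1 w2 : W, w1 ∈ H → w2 ∈ H → ⁅w1, w2⁆ ∈ H := by
    intro w1 w2 h1 h2
    rw [commutatorElement_def]
    exact Subgroup.mul_mem _ (Subgroup.mul_mem _ (Subgroup.mul_mem _ h1 h2)
      (Subgroup.inv_mem _ h1)) (Subgroup.inv_mem _ h2)
  -- the embedded copy of L
  have hsingleH : ∀ g : L,
      (inl (Pi.mulSingle (0 : ZMod N) (DeltaHom L e g)) : W) ∈ H := by
    intro g
    set i := enum.symm g with hi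
    have hig : enum i = g := Equiv.apply_symm_apply enum g
    set D := posz n N (Fin.last n) - posz n N i.castSucc with hD
    have h1 : (inl (fun c => betaF L e n N enum (c + D)) : W) ∈ H :=
      hshiftH _ hβH D
    have h2 : ⁅(inl (fun c => betaF L e n N enum (c + D)) : W), βw⁆ ∈ H :=
      hcommH _ _ h1 hβH
    have h3 : ⁅(inl (fun c => betaF L e n N enum (c + D)) : W), βw⁆
        = inl (Pi.mulSingle (posz n N i.castSucc) (DeltaHom L e (enum i))) := by
      rw [show βw = inl (betaF L e n N enum) from rfl, comm_inl_inl]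
      congr 1
      exact key_comm L e n N hNge hge enum i
    rw [h3] at h2
    have h5 := hconjH _ h2 (posz n N i.castSucc)
    rw [conj_inl] at h5
    have h6 : (fun c => Pi.mulSingle (M := fun _ => Wreath L e) (posz n N i.castSucc)
        (DeltaHom L e (enum i)) (c + posz n N i.castSucc))
        = Pi.mulSingle (M := fun _ => Wreath L e) (0 : ZMod N)
          (DeltaHom L e (enum i)) := by
      funext c
      rcases eq_or_ne c 0 with rfl | hc
      · rw [zero_add]
        simp
      · rw [Pi.mulSingle_eq_of_ne (M := fun _ => Wreath L e)
            (fun h => hc (add_eq_right.mp h)),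
          Pi.mulSingle_eq_of_ne (M := fun _ => Wreath L e) hc]
    rw [h6, hig] at h5
    exact h5
  -- the embedding homomorphism
  let j : L →* W := SemidirectProduct.inl.comp
    ((MonoidHom.mulSingle (fun _ : ZMod N => Wreath L e) (0 : ZMod N)).comp (DeltaHom L e))
  have hjval : ∀ g : L, j g = inl (Pi.mulSingle (0 : ZMod N) (DeltaHom L e g)) :=
    fun g => rfl
  have hjinj : Function.Injective j := by
    intro g h hgh
    rw [hjval, hjval] at hgh
    have h1 := SemidirectProduct.inl_injective hgh
    have h2 := congrFun h1 (0 : ZMod N)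
    simp only [Pi.mulSingle_eq_same] at h2
    exact DeltaHom_inj L e h2
  let f : L →* ↥H := j.codRestrict H (fun g => by rw [hjval]; exact hsingleH g)
  have hfinj : Function.Injective f := by
    intro g h hgh
    exact hjinj (congrArg Subtype.val hgh)
  -- generation by two elements
  let xg : ↥H := ⟨τ, hτH⟩
  let yg : ↥H := ⟨βw, hβH⟩
  have hgen : Subgroup.closure {xg, yg} = ⊤ := by
    apply Subgroup.map_injective H.subtype_injective
    rw [MonoidHom.map_closure, ← MonoidHom.range_eq_map, Subgroup.range_subtype]
    have himg : H.subtype '' {xg, yg} = {τ, βw} := by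
      rw [Set.image_insert_eq, Set.image_singleton]
      rfl
    rw [himg]
  exact ⟨↥H, inferInstance, inferInstance, hsub W hPW H, ⟨xg, yg, hgen⟩, f, hfinj⟩
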